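/- Let d ≥ 1 and let ρ : Matrix (Fin d × Fin d) (Fin d × Fin d) ℂ be positive semidefinite. For N ≥ 1 say that ρ satisfies the N-copy undistillability criterion if for every X : Matrix (Fin N → Fin d) (Fin N → Fin d) ℂ with Matrix.rank X ≤ 2, defining v : (Fin N → Fin d × Fin d) → ℂ by v f = X (fun n => (f n).1) (fun n => (f n).2), one has 0 ≤ Re ( Σ over f, g : Fin N → Fin d × Fin d of conj(v f) · (∏_{n} ρ^{T_A} (f n) (g n)) · (v g) ), where ρ^{T_A} (i,j) (k,l) = ρ (k,j) (i,l) is the partial transpose of ρ. If there is a function k : ℕ → ℕ, unbounded above (for every M there is an i with k i ≥ M), with k i ≥ 1 for all i, such that ρ satisfies the (k i)-copy undistillability criterion for every i, then ρ satisfies the N-copy undistillability criterion for every N ≥ 1. -/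

import Mathlib

open scoped ComplexConjugate ComplexOrder

/-- `ρ` satisfies the `N`-copy undistillability criterion: for every rank-≤2 matrix `X`
(the state–operator image of a Schmidt-rank-≤2 vector `v`), the quadratic form of the
regrouped `(ρ^{T_A})^{⊗N}` on `v` is nonnegative.  Here
`ρ^{T_A} (i,j) (k,l) = ρ (k,j) (i,l)` is the partial transpose. -/
def NCopyUndistillable {d : ℕ} (ρ : Matrix (Fin d × Fin d) (Fin d × Fin d) ℂ)
    (N : ℕ) : Prop :=
  ∀ X : Matrix (Fin N → Fin d) (Fin N → Fin d) ℂ, X.rank ≤ 2 →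
    0 ≤ (∑ f : Fin N → Fin d × Fin d, ∑ g : Fin N → Fin d × Fin d,
      conj (X (fun n => (f n).1) (fun n => (f n).2)) *
        (∏ n : Fin N, ρ ((g n).1, (f n).2) ((f n).1, (g n).2)) *
        X (fun n => (g n).1) (fun n => (g n).2)).re

section Aux

variable {d : ℕ}

/-- Splitting a sum over `Fin (N+1) → α` into head and tail. -/
private lemma sum_cons_split {α : Type*} [Fintype α] [DecidableEq α] {N : ℕ}
    (G : (Fin (N+1) → α) → ℂ) :
    ∑ f : Fin (N+1) → α, G f = ∑ a : α, ∑ f' : Fin N → α, G (Fin.cons a f') := by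
  rw [← Equiv.sum_comp (Fin.consEquiv fun _ => α) G, Fintype.sum_prod_type]
  rfl

/-- The key sum factorization. -/
private lemma sum_step (ρ : Matrix (Fin d × Fin d) (Fin d × Fin d) ℂ)
    (N : ℕ) (p0 : Fin d × Fin d)
    (X : Matrix (Fin N → Fin d) (Fin N → Fin d) ℂ)
    (X' : Matrix (Fin (N+1) → Fin d) (Fin (N+1) → Fin d) ℂ)
    (hX' : ∀ f g, X' f g = (if f 0 = p0.1 then 1 else 0) *
        X (fun n => f n.succ) (fun n => g n.succ) * (if g 0 = p0.2 then 1 else 0)) :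
    (∑ f : Fin (N+1) → Fin d × Fin d, ∑ g : Fin (N+1) → Fin d × Fin d,
      conj (X' (fun n => (f n).1) (fun n => (f n).2)) *
        (∏ n : Fin (N+1), ρ ((g n).1, (f n).2) ((f n).1, (g n).2)) *
        X' (fun n => (g n).1) (fun n => (g n).2))
    = ρ p0 p0 * (∑ f : Fin N → Fin d × Fin d, ∑ g : Fin N → Fin d × Fin d,
      conj (X (fun n => (f n).1) (fun n => (f n).2)) *
        (∏ n : Fin N, ρ ((g n).1, (f n).2) ((f n).1, (g n).2)) *
        X (fun n => (g n).1) (fun n => (g n).2)) := by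
  set t : (Fin N → Fin d × Fin d) → (Fin N → Fin d × Fin d) → ℂ := fun f g =>
      conj (X (fun n => (f n).1) (fun n => (f n).2)) *
        (∏ n : Fin N, ρ ((g n).1, (f n).2) ((f n).1, (g n).2)) *
        X (fun n => (g n).1) (fun n => (g n).2) with ht
  have hterm : ∀ (a b : (Fin d × Fin d)) (f' g' : Fin N → (Fin d × Fin d)),
      (conj (X' (fun n => ((Fin.cons a f' : Fin (N+1) → (Fin d × Fin d)) n).1)
          (fun n => ((Fin.cons a f' : Fin (N+1) → (Fin d × Fin d)) n).2)) *
        (∏ n : Fin (N+1), ρ (((Fin.cons b g' : Fin (N+1) → (Fin d × Fin d)) n).1,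
            ((Fin.cons a f' : Fin (N+1) → (Fin d × Fin d)) n).2)
            (((Fin.cons a f' : Fin (N+1) → (Fin d × Fin d)) n).1,
            ((Fin.cons b g' : Fin (N+1) → (Fin d × Fin d)) n).2)) *
        X' (fun n => ((Fin.cons b g' : Fin (N+1) → (Fin d × Fin d)) n).1)
          (fun n => ((Fin.cons b g' : Fin (N+1) → (Fin d × Fin d)) n).2))
      = (if a = p0 then 1 else 0) * ((if b = p0 then 1 else 0) *
          (ρ (b.1, a.2) (a.1, b.2) * t f' g')) := by
    intro a b f' g'
    rw [hX', hX', Fin.prod_univ_succ]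
    simp only [Fin.cons_zero, Fin.cons_succ, map_mul, ht]
    by_cases h1 : a.1 = p0.1 <;> by_cases h2 : a.2 = p0.2 <;>
      by_cases h3 : b.1 = p0.1 <;> by_cases h4 : b.2 = p0.2 <;>
      simp [h1, h2, h3, h4, Prod.ext_iff, map_one, map_zero] <;> ring
  calc (∑ f : Fin (N+1) → (Fin d × Fin d), ∑ g : Fin (N+1) → (Fin d × Fin d),
      conj (X' (fun n => (f n).1) (fun n => (f n).2)) *
        (∏ n : Fin (N+1), ρ ((g n).1, (f n).2) ((f n).1, (g n).2)) *
        X' (fun n => (g n).1) (fun n => (g n).2))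
      = ∑ a : (Fin d × Fin d), ∑ f' : Fin N → (Fin d × Fin d), ∑ b : (Fin d × Fin d), ∑ g' : Fin N → (Fin d × Fin d),
          (if a = p0 then 1 else 0) * ((if b = p0 then 1 else 0) *
          (ρ (b.1, a.2) (a.1, b.2) * t f' g')) := by
        rw [sum_cons_split]
        refine Finset.sum_congr rfl fun a _ => Finset.sum_congr rfl fun f' _ => ?_
        rw [sum_cons_split]
        exact Finset.sum_congr rfl fun b _ => Finset.sum_congr rfl fun g' _ =>
          hterm a b f' g'
    _ = ∑ a : (Fin d × Fin d), (if a = p0 then 1 else 0) * ∑ b : (Fin d × Fin d), (if b = p0 then 1 else 0) *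
          (ρ (b.1, a.2) (a.1, b.2) * ∑ f' : Fin N → (Fin d × Fin d), ∑ g' : Fin N → (Fin d × Fin d), t f' g') := by
        refine Finset.sum_congr rfl fun a _ => ?_
        rw [Finset.sum_comm]
        simp only [← Finset.mul_sum]
    _ = ρ p0 p0 * ∑ f' : Fin N → (Fin d × Fin d), ∑ g' : Fin N → (Fin d × Fin d), t f' g' := by
        simp [boole_mul, Finset.sum_ite_eq']

end Aux

section Aux2
variable {d : ℕ}

private lemma psd_zero (ρ : Matrix (Fin d × Fin d) (Fin d × Fin d) ℂ)
    (hρ : ρ.PosSemidef) (h : ∀ p, (ρ p p).re ≤ 0) : ρ = 0 := by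
  obtain ⟨B, hB⟩ : ∃ B : Matrix (Fin d × Fin d) (Fin d × Fin d) ℂ, ρ = B.conjTranspose * B := by
    open scoped MatrixOrder Matrix.Norms.L2Operator in
    obtain ⟨B, hB⟩ := CStarAlgebra.nonneg_iff_eq_star_mul_self.mp hρ.nonneg
    exact ⟨B, hB⟩
  have hBz : B = 0 := by
    ext j p
    have hdiag : (ρ p p).re = ∑ i, Complex.normSq (B i p) := by
      rw [hB, Matrix.mul_apply, Complex.re_sum]
      refine Finset.sum_congr rfl fun i _ => ?_
      rw [Matrix.conjTranspose_apply]
      simp [Complex.normSq_apply, Complex.mul_re]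
    have hsum : ∑ i, Complex.normSq (B i p) = 0 :=
      le_antisymm (hdiag ▸ h p) (Finset.sum_nonneg fun i _ => Complex.normSq_nonneg _)
    have := (Finset.sum_eq_zero_iff_of_nonneg
      (fun i _ => Complex.normSq_nonneg (B i p))).mp hsum j (Finset.mem_univ j)
    simpa [Complex.normSq_eq_zero] using this
  rw [hB, hBz]
  simp

private lemma zero_case (ρ : Matrix (Fin d × Fin d) (Fin d × Fin d) ℂ)
    (h0 : ρ = 0) (N : ℕ) (hN : 1 ≤ N) : NCopyUndistillable ρ N := by
  intro X _
  have hz : ∀ f g : Fin N → Fin d × Fin d,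
      (∏ n : Fin N, ρ ((g n).1, (f n).2) ((f n).1, (g n).2)) = 0 := by
    intro f g
    apply Finset.prod_eq_zero (Finset.mem_univ (⟨0, hN⟩ : Fin N))
    simp [h0]
  simp only [hz, mul_zero, zero_mul, Finset.sum_const_zero, Complex.zero_re, le_refl]

private lemma step (ρ : Matrix (Fin d × Fin d) (Fin d × Fin d) ℂ)
    (hherm : ρ.IsHermitian) (p0 : Fin d × Fin d) (hc : 0 < (ρ p0 p0).re)
    (N : ℕ) (h : NCopyUndistillable ρ (N+1)) : NCopyUndistillable ρ N := by
  intro X hX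
  set X' : Matrix (Fin (N+1) → Fin d) (Fin (N+1) → Fin d) ℂ :=
    fun f g => (if f 0 = p0.1 then 1 else 0) *
      X (fun n => f n.succ) (fun n => g n.succ) * (if g 0 = p0.2 then 1 else 0) with hX'def
  have hX' : ∀ f g, X' f g = (if f 0 = p0.1 then 1 else 0) *
      X (fun n => f n.succ) (fun n => g n.succ) * (if g 0 = p0.2 then 1 else 0) :=
    fun f g => rfl
  have hrank : X'.rank ≤ 2 := by
    set P : Matrix (Fin (N+1) → Fin d) (Fin N → Fin d) ℂ :=
      fun f h => (if f 0 = p0.1 then 1 else 0) *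
        (if h = fun n => f n.succ then 1 else 0) with hP
    set Q : Matrix (Fin N → Fin d) (Fin (N+1) → Fin d) ℂ :=
      fun h g => (if h = fun n => g n.succ then 1 else 0) *
        (if g 0 = p0.2 then 1 else 0) with hQ
    have h1 : ∀ (h : Fin N → Fin d) (g : Fin (N+1) → Fin d), (X * Q) h g
        = X h (fun n => g n.succ) * (if g 0 = p0.2 then 1 else 0) := by
      intro h g
      rw [Matrix.mul_apply]
      simp only [hQ, mul_ite, mul_one, mul_zero, ite_mul, zero_mul]
      by_cases hg : g 0 = p0.2 <;> simp [hg, Finset.sum_ite_eq']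
    have hfac : X' = P * (X * Q) := by
      ext f g
      rw [Matrix.mul_apply]
      simp only [hP, mul_assoc, boole_mul, mul_ite, mul_zero, ite_mul, zero_mul]
      rw [Finset.sum_ite_eq']
      simp only [Finset.mem_univ, if_true]
      simp only [h1, hX', mul_assoc, mul_ite, mul_zero, mul_one, ite_mul, zero_mul, one_mul]
      split_ifs <;> rfl
    calc X'.rank = (P * (X * Q)).rank := by rw [hfac]
      _ ≤ (X * Q).rank := Matrix.rank_mul_le_right _ _
      _ ≤ X.rank := Matrix.rank_mul_le_left _ _
      _ ≤ 2 := hX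
  have h0 := h X' hrank
  rw [sum_step ρ N p0 X X' hX'] at h0
  have him : (ρ p0 p0).im = 0 := by
    have := congrFun (congrFun hherm p0) p0
    rw [Matrix.conjTranspose_apply] at this
    have him' := congrArg Complex.im this
    simp only [Complex.star_def, Complex.conj_im] at him'
    linarith
  rw [Complex.mul_re, him, zero_mul, sub_zero] at h0
  nlinarith [h0, hc]

end Aux2


/-- If a positive semidefinite `ρ` satisfies the `(k i)`-copy
undistillability criterion along an unbounded sequence `k` of positive integers, then it
satisfies the `N`-copy undistillability criterion for every `N ≥ 1`. -/
theorem undistillable_of_unbounded_sequence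
    (d : ℕ) (hd : 1 ≤ d)
    (ρ : Matrix (Fin d × Fin d) (Fin d × Fin d) ℂ)
    (hρ : ρ.PosSemidef)
    (k : ℕ → ℕ)
    (hk_unbdd : ∀ M : ℕ, ∃ i : ℕ, M ≤ k i)
    (hk_pos : ∀ i : ℕ, 1 ≤ k i)
    (hcrit : ∀ i : ℕ, NCopyUndistillable ρ (k i)) :
    ∀ N : ℕ, 1 ≤ N → NCopyUndistillable ρ N := by
  by_cases hzero : ∃ p, 0 < (ρ p p).re
  · obtain ⟨p0, hp0⟩ := hzero
    have step' : ∀ m N, NCopyUndistillable ρ (N + m) → NCopyUndistillable ρ N := by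
      intro m
      induction m with
      | zero => exact fun N h => h
      | succ m ih =>
        exact fun N h => ih N (step ρ hρ.isHermitian p0 hp0 (N + m) h)
    intro N _
    obtain ⟨i, hi⟩ := hk_unbdd N
    have hk : k i = N + (k i - N) := (Nat.add_sub_cancel' hi).symm
    exact step' (k i - N) N (hk ▸ hcrit i)
  · push_neg at hzero
    intro N hN
    exact zero_case ρ (psd_zero ρ hρ hzero) N hN
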